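/- arXiv:math/0503398 — 3 statements merged into one kernel-verified Lean document; each statement's English description precedes it below -/
import Mathlib

section
/- For every integer ν ≥ 1, the L-dimension of the subspace Γ_ν of Maps(F̂_{n+1}, F̂_{n+1}) spanned by the monomial operators τ^l ∘ d_s^μ ∘ Δ₁^{i₁} ∘ … ∘ Δ_n^{i_n} with l + μ + i₁ + … + i_n ≤ ν equals the binomial coefficient C(ν + n + 2, n + 2). -/
/-!
Setting: `q = p ^ e`, `L` an algebraically closed field of characteristic `p`
containing `F_q(x)` (via the ring embedding `φ`), `root` the unique `q`-th root map
on `L`.  `CIdx n` indexes the basis monomials `e(m, k₁, …, k_n)` (with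
`m ≤ min(k₁, …, k_n)`) of the space `F̂_{n+1} = CIdx n →₀ L` of `F_q`-linear
polynomials; `tauOp`, `dsOp`, `deltaOp` are the operators `τ`, `d_s`, `Δ_j`, and
`monOp` is the monomial operator `τ^l ∘ d_s^μ ∘ Δ₁^{i₁} ∘ … ∘ Δ_n^{i_n}`.
-/

/-- Index set of the monomial basis `e(m, k₁, …, k_n)` with `m ≤ min(k₁, …, k_n)`. -/
def CIdx (n : ℕ) : Type := {v : ℕ × (Fin n → ℕ) // ∀ j, v.1 ≤ v.2 j}

/-- `(m, k⃗) ↦ (m+1, k⃗+1)`. -/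
def shiftUp {n : ℕ} (i : CIdx n) : CIdx n :=
  ⟨(i.1.1 + 1, fun j => i.1.2 j + 1), fun j => Nat.succ_le_succ (i.2 j)⟩

/-- `(m, k⃗) ↦ (m-1, k⃗-1)` (truncated subtraction). -/
def shiftDown {n : ℕ} (i : CIdx n) : CIdx n :=
  ⟨(i.1.1 - 1, fun j => i.1.2 j - 1), fun j => Nat.sub_le_sub_right (i.2 j) 1⟩

/-- The operator `τ` : `τ(a·e(m,k⃗)) = a^q · e(m+1, k⃗+1)`. -/
noncomputable def tauOp (L : Type) [Field L] (q n : ℕ) :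
    (CIdx n →₀ L) → (CIdx n →₀ L) :=
  fun f => f.sum fun i a => Finsupp.single (shiftUp i) (a ^ q)

/-- The Carlitz derivative `d_s` : `d_s(a·e(m,k⃗)) = a^{1/q}·[m]^{1/q}·e(m-1,k⃗-1)`
(which vanishes for `m = 0` since `[0] = x^{q^0} - x = 0` and `root 0 = 0`). -/
noncomputable def dsOp (L : Type) [Field L] (root : L → L) (x : L) (q n : ℕ) :
    (CIdx n →₀ L) → (CIdx n →₀ L) :=
  fun f => f.sum fun i a =>
    Finsupp.single (shiftDown i) (root (x ^ q ^ i.1.1 - x) * root a)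

/-- The operator `Δ_j` : `Δ_j(a·e(m,k⃗)) = [k_j]·a·e(m,k⃗)`. -/
noncomputable def deltaOp (L : Type) [Field L] (x : L) (q n : ℕ) (j : Fin n) :
    (CIdx n →₀ L) → (CIdx n →₀ L) :=
  fun f => f.sum fun i a => Finsupp.single i ((x ^ q ^ i.1.2 j - x) * a)

/-- The monomial operator `τ^l ∘ d_s^μ ∘ Δ₁^{i₁} ∘ … ∘ Δ_n^{i_n}`. -/
noncomputable def monOp (L : Type) [Field L] (root : L → L) (x : L) (q n : ℕ)
    (l μ : ℕ) (iv : Fin n → ℕ) : (CIdx n →₀ L) → (CIdx n →₀ L) :=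
  (tauOp L q n)^[l] ∘ (dsOp L root x q n)^[μ] ∘
    (List.ofFn fun j : Fin n => (deltaOp L x q n j)^[iv j]).foldr (· ∘ ·) id

section Aux

variable {L : Type} [Field L]

/-- The Carlitz bracket `[k] = x^{q^k} - x`. -/
def br (x : L) (q k : ℕ) : L := x ^ q ^ k - x

/-- `A μ m` : `q^μ`-th power of the coefficient produced by `d_s^μ` on `e(m,k)`. -/
def Acoef (x : L) (q : ℕ) : ℕ → ℕ → L
  | 0, _ => 1
  | μ + 1, m => (Acoef x q μ (m - 1)) ^ q * br x q m

/-- The coefficient produced by `μ` iterations of `d_s` starting at level `m`. -/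
def Rcoef (rt : L → L) (x : L) (q : ℕ) : ℕ → ℕ → L → L
  | 0, _, a => a
  | μ + 1, m, a => Rcoef rt x q μ (m - 1) (rt (br x q m) * rt a)

lemma CIdx.ext' {n : ℕ} {i j : CIdx n} (h1 : i.1.1 = j.1.1)
    (h2 : ∀ t, i.1.2 t = j.1.2 t) : i = j :=
  Subtype.ext (Prod.ext h1 (funext h2))

lemma shiftDown_iter_fst {n : ℕ} (μ : ℕ) (i : CIdx n) :
    (shiftDown^[μ] i).1.1 = i.1.1 - μ := by
  induction μ generalizing i with
  | zero => simp
  | succ μ ih =>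
      rw [Function.iterate_succ_apply, ih]
      show i.1.1 - 1 - μ = i.1.1 - (μ + 1)
      omega

lemma shiftDown_iter_snd {n : ℕ} (μ : ℕ) (i : CIdx n) (j : Fin n) :
    (shiftDown^[μ] i).1.2 j = i.1.2 j - μ := by
  induction μ generalizing i with
  | zero => simp
  | succ μ ih =>
      rw [Function.iterate_succ_apply, ih]
      show i.1.2 j - 1 - μ = i.1.2 j - (μ + 1)
      omega

lemma shiftUp_iter_fst {n : ℕ} (l : ℕ) (i : CIdx n) :
    (shiftUp^[l] i).1.1 = i.1.1 + l := by
  induction l generalizing i with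
  | zero => simp
  | succ l ih =>
      rw [Function.iterate_succ_apply, ih]
      show i.1.1 + 1 + l = i.1.1 + (l + 1)
      omega

lemma shiftUp_iter_snd {n : ℕ} (l : ℕ) (i : CIdx n) (j : Fin n) :
    (shiftUp^[l] i).1.2 j = i.1.2 j + l := by
  induction l generalizing i with
  | zero => simp
  | succ l ih =>
      rw [Function.iterate_succ_apply, ih]
      show i.1.2 j + 1 + l = i.1.2 j + (l + 1)
      omega

lemma tauOp_single (q n : ℕ) (hq : q ≠ 0) (i : CIdx n) (a : L) :
    tauOp L q n (Finsupp.single i a) = Finsupp.single (shiftUp i) (a ^ q) := by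
  unfold tauOp
  rw [Finsupp.sum_single_index]
  rw [zero_pow hq, Finsupp.single_zero]

lemma dsOp_single (rt : L → L) (x : L) (q n : ℕ) (h0 : rt 0 = 0) (i : CIdx n) (a : L) :
    dsOp L rt x q n (Finsupp.single i a) =
      Finsupp.single (shiftDown i) (rt (br x q i.1.1) * rt a) := by
  unfold dsOp
  rw [Finsupp.sum_single_index]
  · rfl
  · rw [h0, mul_zero, Finsupp.single_zero]

lemma deltaOp_single (x : L) (q n : ℕ) (j : Fin n) (i : CIdx n) (a : L) :
    deltaOp L x q n j (Finsupp.single i a) =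
      Finsupp.single i (br x q (i.1.2 j) * a) := by
  unfold deltaOp
  rw [Finsupp.sum_single_index]
  · rfl
  · rw [mul_zero, Finsupp.single_zero]

lemma tauOp_iter_single (q n : ℕ) (hq : q ≠ 0) (l : ℕ) (i : CIdx n) (a : L) :
    (tauOp L q n)^[l] (Finsupp.single i a) =
      Finsupp.single (shiftUp^[l] i) (a ^ q ^ l) := by
  induction l generalizing i a with
  | zero => simp
  | succ l ih =>
      rw [Function.iterate_succ_apply, tauOp_single q n hq, ih,
        Function.iterate_succ_apply]
      congr 1
      rw [← pow_mul, ← pow_succ']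

lemma dsOp_iter_single (rt : L → L) (x : L) (q n : ℕ) (h0 : rt 0 = 0)
    (μ : ℕ) (i : CIdx n) (a : L) :
    (dsOp L rt x q n)^[μ] (Finsupp.single i a) =
      Finsupp.single (shiftDown^[μ] i) (Rcoef rt x q μ i.1.1 a) := by
  induction μ generalizing i a with
  | zero => simp [Rcoef]
  | succ μ ih =>
      rw [Function.iterate_succ_apply, dsOp_single rt x q n h0, ih,
        Function.iterate_succ_apply]
      rfl

lemma deltaOp_iter_single (x : L) (q n : ℕ) (j : Fin n) (t : ℕ) (i : CIdx n) (a : L) :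
    (deltaOp L x q n j)^[t] (Finsupp.single i a) =
      Finsupp.single i (br x q (i.1.2 j) ^ t * a) := by
  induction t generalizing a with
  | zero => simp
  | succ t ih =>
      rw [Function.iterate_succ_apply, deltaOp_single, ih]
      congr 1
      rw [pow_succ]
      ring

lemma deltaFold_list (x : L) (q n : ℕ) (iv : Fin n → ℕ) (ls : List (Fin n))
    (i : CIdx n) (a : L) :
    ((ls.map fun j => (deltaOp L x q n j)^[iv j]).foldr (· ∘ ·) id)
        (Finsupp.single i a)
      = Finsupp.single i ((ls.map fun j => br x q (i.1.2 j) ^ iv j).prod * a) := by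
  induction ls generalizing a with
  | nil => simp
  | cons j ls ih =>
      simp only [List.map_cons, List.foldr_cons, Function.comp_apply, ih,
        deltaOp_iter_single, List.prod_cons]
      congr 1
      ring

lemma deltaFold_single (x : L) (q n : ℕ) (iv : Fin n → ℕ) (i : CIdx n) (a : L) :
    ((List.ofFn fun j : Fin n => (deltaOp L x q n j)^[iv j]).foldr (· ∘ ·) id)
        (Finsupp.single i a)
      = Finsupp.single i ((∏ j, br x q (i.1.2 j) ^ iv j) * a) := by
  rw [List.ofFn_eq_map, deltaFold_list, ← List.ofFn_eq_map, List.prod_ofFn]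

lemma monOp_single (rt : L → L) (x : L) (q n : ℕ) (hq : q ≠ 0) (h0 : rt 0 = 0)
    (l μ : ℕ) (iv : Fin n → ℕ) (i : CIdx n) :
    monOp L rt x q n l μ iv (Finsupp.single i (1 : L)) =
      Finsupp.single (shiftUp^[l] (shiftDown^[μ] i))
        ((Rcoef rt x q μ i.1.1 (∏ j, br x q (i.1.2 j) ^ iv j)) ^ q ^ l) := by
  unfold monOp
  simp only [Function.comp_apply]
  rw [deltaFold_single, mul_one, dsOp_iter_single rt x q n h0,
    tauOp_iter_single q n hq]

lemma Rcoef_pow (rt : L → L) (x : L) (q : ℕ) (hrt : ∀ c, rt c ^ q = c)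
    (μ m : ℕ) (a : L) :
    (Rcoef rt x q μ m a) ^ q ^ μ = Acoef x q μ m * a := by
  induction μ generalizing m a with
  | zero => simp [Rcoef, Acoef]
  | succ μ ih =>
      show (Rcoef rt x q μ (m - 1) (rt (br x q m) * rt a)) ^ q ^ (μ + 1) = _
      rw [pow_succ, pow_mul, ih, mul_pow, mul_pow, hrt, hrt]
      show _ = (Acoef x q μ (m - 1)) ^ q * br x q m * a
      ring

lemma Acoef_eq_zero (x : L) (q : ℕ) (hq : q ≠ 0) :
    ∀ μ m : ℕ, m < μ → Acoef x q μ m = 0 := by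
  intro μ
  induction μ with
  | zero => intro m h; omega
  | succ μ ih =>
      intro m h
      show (Acoef x q μ (m - 1)) ^ q * br x q m = 0
      rcases Nat.eq_zero_or_pos m with hm | hm
      · subst hm
        have : br x q 0 = 0 := by simp [br]
        rw [this, mul_zero]
      · rw [ih (m - 1) (by omega), zero_pow hq, zero_mul]

lemma Acoef_ne_zero (x : L) (q : ℕ) (hbr : ∀ k, 1 ≤ k → br x q k ≠ 0) :
    ∀ μ m : ℕ, μ ≤ m → Acoef x q μ m ≠ 0 := by
  intro μ
  induction μ with
  | zero => intro m _; exact one_ne_zero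
  | succ μ ih =>
      intro m h
      show (Acoef x q μ (m - 1)) ^ q * br x q m ≠ 0
      exact mul_ne_zero (pow_ne_zero _ (ih (m - 1) (by omega)))
        (hbr m (by omega))

lemma Rcoef_eq_zero (rt : L → L) (x : L) (q : ℕ) (hq : q ≠ 0)
    (hrt : ∀ c, rt c ^ q = c) (μ m : ℕ) (a : L) (h : m < μ) :
    Rcoef rt x q μ m a = 0 := by
  have h1 := Rcoef_pow rt x q hrt μ m a
  rw [Acoef_eq_zero x q hq μ m h, zero_mul] at h1
  exact pow_eq_zero_iff (pow_ne_zero μ hq) |>.mp h1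

lemma sep_one {ι : Type*} (S : Set L) (hS : S.Infinite) (G : Finset ι)
    (c : ι → L) (d : ι → ℕ)
    (H : ∀ y ∈ S, ∑ t ∈ G, c t * y ^ d t = 0) (D : ℕ) :
    ∑ t ∈ G.filter (fun t => d t = D), c t = 0 := by
  classical
  set P : Polynomial L := ∑ t ∈ G, Polynomial.C (c t) * Polynomial.X ^ d t with hP
  have hPz : P = 0 := by
    apply Polynomial.eq_zero_of_infinite_isRoot
    apply hS.mono
    intro y hy
    simp only [Set.mem_setOf_eq, Polynomial.IsRoot, hP, Polynomial.eval_finset_sum,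
      Polynomial.eval_mul, Polynomial.eval_C, Polynomial.eval_pow, Polynomial.eval_X]
    exact H y hy
  have h2 := congrArg (fun Q => Polynomial.coeff Q D) hPz
  simp only [hP, Polynomial.finset_sum_coeff, Polynomial.coeff_C_mul,
    Polynomial.coeff_X_pow, Polynomial.coeff_zero, mul_ite, mul_one, mul_zero] at h2
  rw [Finset.sum_filter]
  have h3 : ∀ t ∈ G, (if d t = D then c t else 0) = (if D = d t then c t else 0) := by
    intro t _
    by_cases h : d t = D
    · rw [if_pos h, if_pos h.symm]
    · rw [if_neg h, if_neg (fun hh => h hh.symm)]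
  rw [Finset.sum_congr rfl h3]
  exact h2

lemma sep_prod {n : ℕ} {ι : Type*} (B : ℕ → L) (hB : Function.Injective B)
    (G : Finset ι) (w : ι → L) (ivf : ι → Fin n → ℕ) (m : ℕ)
    (H : ∀ k : Fin n → ℕ, (∀ j, m ≤ k j) →
      ∑ t ∈ G, w t * ∏ j, B (k j) ^ ivf t j = 0)
    (iv₁ : Fin n → ℕ) :
    ∑ t ∈ G.filter (fun t => ivf t = iv₁), w t = 0 := by
  classical
  have hSinf : (B '' Set.Ici m).Infinite :=
    (Set.Ici_infinite m).image (hB.injOn)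
  have key : ∀ r : ℕ, r ≤ n → ∀ k : Fin n → ℕ, (∀ j, m ≤ k j) →
      ∑ t ∈ G.filter (fun t => ∀ j : Fin n, (j : ℕ) < r → ivf t j = iv₁ j),
        w t * ∏ j ∈ Finset.univ.filter (fun j : Fin n => r ≤ (j : ℕ)),
          B (k j) ^ ivf t j = 0 := by
    intro r
    induction r with
    | zero =>
        intro _ k hk
        have h1 : G.filter (fun t => ∀ j : Fin n, (j : ℕ) < 0 → ivf t j = iv₁ j) = G := by
          apply Finset.filter_true_of_mem; intro t _ j hj; omega
        have h2 : Finset.univ.filter (fun j : Fin n => 0 ≤ (j : ℕ)) = Finset.univ := by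
          apply Finset.filter_true_of_mem; intro j _; omega
        rw [h1, h2]; exact H k hk
    | succ r ih =>
        intro hr k hk
        have hrn : r < n := by omega
        set jr : Fin n := ⟨r, hrn⟩ with hjr
        set Gr := G.filter (fun t => ∀ j : Fin n, (j : ℕ) < r → ivf t j = iv₁ j) with hGr
        have hsplit : Finset.univ.filter (fun j : Fin n => r ≤ (j : ℕ))
            = insert jr (Finset.univ.filter (fun j : Fin n => r + 1 ≤ (j : ℕ))) := by
          ext j
          simp only [Finset.mem_filter, Finset.mem_univ, true_and, Finset.mem_insert]
          constructor
          · intro h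
            rcases Nat.eq_or_lt_of_le h with h' | h'
            · left; exact Fin.ext h'.symm
            · right; omega
          · rintro (rfl | h)
            · exact le_rfl
            · omega
        have hnotmem : jr ∉ Finset.univ.filter (fun j : Fin n => r + 1 ≤ (j : ℕ)) := by
          simp [hjr]
        have Hy : ∀ y ∈ B '' Set.Ici m,
            ∑ t ∈ Gr, (w t * ∏ j ∈ Finset.univ.filter (fun j : Fin n => r + 1 ≤ (j : ℕ)),
              B (k j) ^ ivf t j) * y ^ ivf t jr = 0 := by
          rintro y ⟨K, hK, rfl⟩
          have hupd : ∀ j, m ≤ Function.update k jr K j := by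
            intro j
            rcases eq_or_ne j jr with rfl | h
            · rw [Function.update_self]; exact hK
            · rw [Function.update_of_ne h]; exact hk j
          have h3 := ih (by omega) (Function.update k jr K) hupd
          rw [← h3]
          apply Finset.sum_congr rfl
          intro t _
          rw [hsplit, Finset.prod_insert hnotmem, Function.update_self]
          have hpr : ∀ j ∈ Finset.univ.filter (fun j : Fin n => r + 1 ≤ (j : ℕ)),
              B (Function.update k jr K j) ^ ivf t j = B (k j) ^ ivf t j := by
            intro j hj
            have : j ≠ jr := by
              simp only [Finset.mem_filter] at hj
              intro h; subst h; simp [hjr] at hj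
            rw [Function.update_of_ne this]
          rw [Finset.prod_congr rfl hpr]
          ring
        have h4 := sep_one (B '' Set.Ici m) hSinf Gr
          (fun t => w t * ∏ j ∈ Finset.univ.filter (fun j : Fin n => r + 1 ≤ (j : ℕ)),
            B (k j) ^ ivf t j)
          (fun t => ivf t jr) Hy (iv₁ jr)
        rw [← h4, hGr, Finset.filter_filter]
        apply Finset.sum_congr _ (fun _ _ => rfl)
        apply Finset.filter_congr
        intro t _
        constructor
        · intro h
          constructor
          · intro j hj; exact h j (by omega)
          · exact h jr (Nat.lt_succ_self r)
        · rintro ⟨h1, h2⟩ j hj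
          rcases Nat.lt_or_ge (j : ℕ) r with h' | h'
          · exact h1 j h'
          · have : j = jr := Fin.ext (show (j : ℕ) = r by omega)
            subst this; exact h2
  have h5 := key n le_rfl (fun _ => m) (fun _ => le_rfl)
  have h6 : Finset.univ.filter (fun j : Fin n => n ≤ (j : ℕ)) = (∅ : Finset (Fin n)) := by
    apply Finset.filter_false_of_mem
    intro j _
    have := j.isLt
    omega
  rw [h6] at h5
  simp only [Finset.prod_empty, mul_one] at h5
  rw [← h5]
  apply Finset.sum_congr _ (fun _ _ => rfl)
  apply Finset.filter_congr
  intro t _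
  constructor
  · intro h; exact fun j _ => congrFun h j
  · intro h; funext j; exact h j j.isLt

lemma hockey (r : ℕ) : ∀ N : ℕ, ∑ i ∈ Finset.range (N + 1), (i + r).choose r
    = (N + r + 1).choose (r + 1) := by
  intro N
  induction N with
  | zero => simp
  | succ N ih =>
      rw [Finset.sum_range_succ, ih]
      have h1 : N + 1 + r = N + r + 1 := by omega
      rw [h1, Nat.choose_succ_succ' (N + r + 1) r]
      omega

lemma count_le (r : ℕ) : ∀ N : ℕ,
    ((Fintype.piFinset (fun _ : Fin r => Finset.range (N + 1))).filter
      (fun v : Fin r → ℕ => ∑ j, v j ≤ N)).card = (N + r).choose r := by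
  induction r with
  | zero =>
      intro N
      simp
  | succ r ih =>
      intro N
      classical
      rw [Finset.card_eq_sum_card_fiberwise
        (f := fun v : Fin (r+1) → ℕ => v 0) (t := Finset.range (N + 1))
        (by
          intro v hv
          simp only [Finset.mem_coe, Finset.mem_filter, Fintype.mem_piFinset, Finset.mem_range] at hv ⊢
          exact (hv.1 0))]
      have fib : ∀ s ∈ Finset.range (N + 1),
          (((Fintype.piFinset (fun _ : Fin (r+1) => Finset.range (N + 1))).filter
            (fun v : Fin (r+1) → ℕ => ∑ j, v j ≤ N)).filter
              (fun v => v 0 = s)).card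
          = ((Fintype.piFinset (fun _ : Fin r => Finset.range (N - s + 1))).filter
            (fun v : Fin r → ℕ => ∑ j, v j ≤ N - s)).card := by
        intro s hs
        simp only [Finset.mem_range] at hs
        apply Finset.card_nbij' (i := fun v => Fin.tail v) (j := fun w => Fin.cons s w)
        · intro v hv
          simp only [Finset.mem_coe, Finset.mem_filter, Fintype.mem_piFinset, Finset.mem_range,
            Fin.sum_univ_succ] at hv
          obtain ⟨⟨hv1, hv2⟩, hv0⟩ := hv
          have hb : ∀ j : Fin r, v j.succ ≤ ∑ j' : Fin r, v j'.succ :=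
            fun j => Finset.single_le_sum (f := fun j' : Fin r => v j'.succ)
              (fun _ _ => Nat.zero_le _) (Finset.mem_univ j)
          simp only [Finset.mem_coe, Finset.mem_filter, Fintype.mem_piFinset, Finset.mem_range, Fin.tail]
          exact ⟨fun j => by have := hb j; have := hv1 j.succ; omega, by omega⟩
        · intro w hw
          simp only [Finset.mem_coe, Finset.mem_filter, Fintype.mem_piFinset, Finset.mem_range] at hw
          obtain ⟨hw1, hw2⟩ := hw
          have hb : ∀ j : Fin r, w j ≤ ∑ j' : Fin r, w j' :=
            fun j => Finset.single_le_sum (fun _ _ => Nat.zero_le _) (Finset.mem_univ j)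
          simp only [Finset.mem_coe, Finset.mem_filter, Fintype.mem_piFinset, Finset.mem_range,
            Fin.sum_cons, Fin.forall_fin_succ, Fin.cons_zero, Fin.cons_succ]
          refine ⟨⟨⟨by omega, fun j => by have := hb j; have := hw1 j; omega⟩, ?_⟩, trivial⟩
          omega
        · intro v hv
          simp only [Finset.mem_coe, Finset.mem_filter] at hv
          rw [← hv.2]
          exact Fin.cons_self_tail v
        · intro w _
          funext j
          simp [Fin.tail, Fin.cons_succ]
      rw [Finset.sum_congr rfl fib]
      have hih : ∀ s ∈ Finset.range (N + 1),
          ((Fintype.piFinset (fun _ : Fin r => Finset.range (N - s + 1))).filter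
            (fun v : Fin r → ℕ => ∑ j, v j ≤ N - s)).card = (N - s + r).choose r :=
        fun s _ => ih (N - s)
      rw [Finset.sum_congr rfl hih]
      have hrefl : ∑ s ∈ Finset.range (N + 1), (N - s + r).choose r
          = ∑ i ∈ Finset.range (N + 1), (i + r).choose r := by
        rw [← Finset.sum_range_reflect]
        apply Finset.sum_congr rfl
        intro i hi
        simp only [Finset.mem_range] at hi
        congr 2
        omega
      rw [hrefl, hockey]
      congr 1

lemma card_F (n ν : ℕ) (F : Finset (ℕ × ℕ × (Fin n → ℕ)))
    (hmemF : ∀ t : ℕ × ℕ × (Fin n → ℕ), t ∈ F ↔ t.1 + t.2.1 + ∑ j, t.2.2 j ≤ ν) :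
    F.card = ((Fintype.piFinset (fun _ : Fin (n+2) => Finset.range (ν + 1))).filter
      (fun v : Fin (n+2) → ℕ => ∑ j, v j ≤ ν)).card := by
  classical
  apply Finset.card_nbij' (i := fun t : ℕ × ℕ × (Fin n → ℕ) =>
      (Fin.cons t.1 ((Fin.cons t.2.1 t.2.2 : Fin (n + 1) → ℕ)) : Fin (n + 2) → ℕ))
    (j := fun v : Fin (n + 2) → ℕ =>
      ((v 0 : ℕ), (v (Fin.succ 0) : ℕ), fun j : Fin n => (v (Fin.succ (Fin.succ j)) : ℕ)))
  · intro t ht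
    rw [Finset.mem_coe, hmemF] at ht
    have hj : ∀ j, t.2.2 j ≤ ∑ j', t.2.2 j' :=
      fun j => Finset.single_le_sum (fun _ _ => Nat.zero_le _) (Finset.mem_univ j)
    simp only [Finset.mem_coe, Finset.mem_filter, Fintype.mem_piFinset, Finset.mem_range,
      Fin.sum_cons, Fin.forall_fin_succ, Fin.cons_zero, Fin.cons_succ]
    exact ⟨⟨by omega, by omega, fun j => by have := hj j; omega⟩, by omega⟩
  · intro v hv
    simp only [Finset.mem_coe, Finset.mem_filter, Fintype.mem_piFinset, Finset.mem_range,
      Fin.sum_univ_succ] at hv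
    rw [Finset.mem_coe, hmemF]
    simp only
    omega
  · intro t _
    simp only [Fin.cons_zero, Fin.cons_succ]
  · intro v _
    funext j
    refine Fin.cases ?_ (fun j' => ?_) j
    · simp
    · refine Fin.cases ?_ (fun j'' => ?_) j' <;> simp

end Aux

/-- **Dimension of the Bernstein-type filtration step `Γ_ν` (Lemma 1).**
For `ν ≥ 1`, the `L`-dimension of the span of the monomial operators
`τ^l ∘ d_s^μ ∘ Δ₁^{i₁} ∘ … ∘ Δ_n^{i_n}` with `l + μ + i₁ + ⋯ + i_n ≤ ν`
equals `C(ν + n + 2, n + 2)`. -/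
theorem carlitz_filtration_dim
    (p e q : ℕ) [Fact p.Prime] (he : 0 < e) (hq : q = p ^ e)
    (L : Type) [Field L] [IsAlgClosed L] [CharP L p]
    (φ : RatFunc (GaloisField p e) →+* L)
    (root : L → L) (hroot1 : ∀ c, root c ^ q = c) (hroot2 : ∀ c, root (c ^ q) = c)
    (n : ℕ) (ν : ℕ) (hν : 1 ≤ ν) :
    Module.finrank L (Submodule.span L
      {T : (CIdx n →₀ L) → (CIdx n →₀ L) |
        ∃ (l μ : ℕ) (iv : Fin n → ℕ), l + μ + ∑ j, iv j ≤ ν ∧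
          T = monOp L root (φ RatFunc.X) q n l μ iv}) =
      (ν + n + 2).choose (n + 2) := by
  classical
  have hp : p.Prime := Fact.out
  have hple : p ≤ q := by rw [hq]; exact Nat.le_self_pow (by omega) p
  have hq2 : 2 ≤ q := le_trans hp.two_le hple
  have hq0 : q ≠ 0 := by omega
  set x : L := φ RatFunc.X with hxdef
  have hrt0 : root 0 = 0 := by
    have := hroot2 0
    rwa [zero_pow hq0] at this
  have hqinj : Function.Injective (fun c : L => c ^ q) := by
    intro a b hab
    have h := congrArg root hab
    simpa only [hroot2] using h
  have hpowE : ∀ E : ℕ, Function.Injective (fun c : L => c ^ q ^ E) := by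
    intro E
    induction E with
    | zero => intro a b h; simpa using h
    | succ E ih =>
        intro a b hab
        simp only [pow_succ, pow_mul] at hab
        exact ih (hqinj hab)
  have hXpow : ∀ a b : ℕ,
      (RatFunc.X : RatFunc (GaloisField p e)) ^ a = RatFunc.X ^ b → a = b := by
    intro a b hh
    have h1 : (algebraMap (Polynomial (GaloisField p e)) (RatFunc (GaloisField p e)))
        (Polynomial.X ^ a)
        = (algebraMap (Polynomial (GaloisField p e)) (RatFunc (GaloisField p e)))
          (Polynomial.X ^ b) := by
      rw [map_pow, map_pow, RatFunc.algebraMap_X, hh]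
    have h2 := RatFunc.algebraMap_injective _ h1
    have h3 := congrArg Polynomial.natDegree h2
    simpa [Polynomial.natDegree_X_pow] using h3
  have hbr_inj : Function.Injective (fun k : ℕ => br x q k) := by
    intro a b hab
    simp only [br] at hab
    have h1 : x ^ q ^ a = x ^ q ^ b := sub_left_inj.mp hab
    have h2 : φ (RatFunc.X ^ q ^ a) = φ (RatFunc.X ^ q ^ b) := by
      rw [map_pow, map_pow, ← hxdef]; exact h1
    exact Nat.pow_right_injective hq2 (hXpow _ _ (φ.injective h2))
  have hbr_ne : ∀ k, 1 ≤ k → br x q k ≠ 0 := by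
    intro k hk hzero
    have h1 : x ^ q ^ k = x ^ 1 := by
      rw [pow_one]
      exact sub_eq_zero.mp hzero
    have h2 : φ (RatFunc.X ^ q ^ k) = φ (RatFunc.X ^ 1) := by
      rw [map_pow, map_pow, ← hxdef]; exact h1
    have h3 := hXpow _ _ (φ.injective h2)
    have h4 : 2 ≤ q ^ k := le_trans hq2 (Nat.le_self_pow (by omega) q)
    omega
  -- the finite index set
  set F : Finset (ℕ × ℕ × (Fin n → ℕ)) :=
    (Finset.range (ν+1) ×ˢ Finset.range (ν+1) ×ˢ
      Fintype.piFinset fun _ : Fin n => Finset.range (ν+1)).filter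
      (fun t => t.1 + t.2.1 + ∑ j, t.2.2 j ≤ ν) with hF
  have hmemF : ∀ t : ℕ × ℕ × (Fin n → ℕ), t ∈ F ↔ t.1 + t.2.1 + ∑ j, t.2.2 j ≤ ν := by
    intro t
    rw [hF, Finset.mem_filter]
    constructor
    · exact fun h => h.2
    · intro h
      refine ⟨?_, h⟩
      simp only [Finset.mem_product, Finset.mem_range, Fintype.mem_piFinset]
      have hj : ∀ j, t.2.2 j ≤ ∑ j', t.2.2 j' :=
        fun j => Finset.single_le_sum (fun _ _ => Nat.zero_le _) (Finset.mem_univ j)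
      exact ⟨by omega, by omega, fun j => by have := hj j; omega⟩
  set bfun : F → ((CIdx n →₀ L) → (CIdx n →₀ L)) :=
    fun t => monOp L root x q n t.1.1 t.1.2.1 t.1.2.2 with hbfun
  have hset : {T : (CIdx n →₀ L) → (CIdx n →₀ L) |
      ∃ (l μ : ℕ) (iv : Fin n → ℕ), l + μ + ∑ j, iv j ≤ ν ∧
        T = monOp L root x q n l μ iv} = Set.range bfun := by
    ext T
    simp only [Set.mem_setOf_eq, Set.mem_range]
    constructor
    · rintro ⟨l, μ, iv, hle, rfl⟩
      refine ⟨⟨(l, μ, iv), (hmemF _).mpr hle⟩, ?_⟩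
      simp only [hbfun]
    · rintro ⟨⟨⟨l, μ, iv⟩, ht⟩, rfl⟩
      refine ⟨l, μ, iv, (hmemF _).mp ht, ?_⟩
      simp only [hbfun]
  -- linear independence
  have hLI : LinearIndependent L bfun := by
    rw [Fintype.linearIndependent_iff]
    intro g hg t₀
    obtain ⟨⟨l₀, μ₀, iv₀⟩, ht₀F⟩ := t₀
    have hbnd : ∀ t : F, t.1.1 + t.1.2.1 + ∑ j, t.1.2.2 j ≤ ν :=
      fun t => (hmemF t.1).mp t.2
    have hμ₀ν : μ₀ ≤ ν := by
      have h := (hmemF _).mp ht₀F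
      simp only at h
      omega
    set E : ℕ := ν + l₀ - μ₀ with hE
    haveI : ExpChar L p := ExpChar.prime hp
    have hqν : (p : ℕ) ^ (e * ν) = q ^ ν := by rw [hq, ← pow_mul]
    have key1 : ∀ (m : ℕ) (k : Fin n → ℕ), (∀ j, m ≤ k j) →
        ∑ t : F, (if t.1.1 + μ₀ = t.1.2.1 + l₀ then
            g t ^ q ^ ν *
              ((Acoef x q t.1.2.1 m * ∏ j, br x q (k j) ^ t.1.2.2 j) ^ q ^ E)
          else 0) = 0 := by
      intro m k hk
      rcases Nat.lt_or_ge (m + l₀) μ₀ with hcase | hcase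
      · apply Finset.sum_eq_zero
        intro t _
        split_ifs with hcond
        · have hμt : m < t.1.2.1 := by omega
          rw [Acoef_eq_zero x q hq0 _ _ hμt, zero_mul,
            zero_pow (pow_ne_zero E hq0), mul_zero]
        · rfl
      · set ix : CIdx n := ⟨(m, k), hk⟩ with hix
        set ι₀ : CIdx n := ⟨(m + l₀ - μ₀, fun j => k j + l₀ - μ₀),
          fun j => show m + l₀ - μ₀ ≤ k j + l₀ - μ₀ by have := hk j; omega⟩ with hι₀
        have hixfst : ix.1.1 = m := rfl
        have hixsnd : ∀ j, ix.1.2 j = k j := fun _ => rfl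
        have hι₀fst : ι₀.1.1 = m + l₀ - μ₀ := rfl
        have hι₀snd : ∀ j, ι₀.1.2 j = k j + l₀ - μ₀ := fun _ => rfl
        have h1 := congrFun hg (Finsupp.single ix 1)
        rw [Finset.sum_apply] at h1
        have h1' : ∑ t : F, g t • (bfun t (Finsupp.single ix 1)) = 0 := by
          simpa only [Pi.smul_apply, Pi.zero_apply] using h1
        have h2 := DFunLike.congr_fun h1' ι₀
        rw [Finsupp.finset_sum_apply] at h2
        simp only [Finsupp.smul_apply, smul_eq_mul, Finsupp.coe_zero,
          Pi.zero_apply] at h2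
        have h3 : ∀ t : F, (bfun t (Finsupp.single ix 1)) ι₀ =
            if t.1.1 + μ₀ = t.1.2.1 + l₀ then
              (Rcoef root x q t.1.2.1 m (∏ j, br x q (k j) ^ t.1.2.2 j)) ^ q ^ t.1.1
            else 0 := by
          intro t
          simp only [hbfun]
          rw [monOp_single root x q n hq0 hrt0]
          simp only [hixfst, hixsnd]
          rcases Nat.lt_or_ge m t.1.2.1 with hmμ | hmμ
          · rw [Rcoef_eq_zero root x q hq0 hroot1 _ _ _ hmμ,
              zero_pow (pow_ne_zero _ hq0), Finsupp.single_zero]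
            simp only [Finsupp.coe_zero, Pi.zero_apply]
            split_ifs with hcond <;> rfl
          · split_ifs with hcond
            · have hidx : shiftUp^[t.1.1] (shiftDown^[t.1.2.1] ix) = ι₀ := by
                apply CIdx.ext'
                · rw [shiftUp_iter_fst, shiftDown_iter_fst, hixfst, hι₀fst]
                  omega
                · intro j
                  rw [shiftUp_iter_snd, shiftDown_iter_snd, hixsnd, hι₀snd]
                  have := hk j
                  omega
              rw [hidx, Finsupp.single_eq_same]
            · have hidx : shiftUp^[t.1.1] (shiftDown^[t.1.2.1] ix) ≠ ι₀ := by
                intro hcontra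
                have hc := congrArg (fun z : CIdx n => z.1.1) hcontra
                rw [shiftUp_iter_fst, shiftDown_iter_fst, hixfst] at hc
                have hc' : m - (t : ℕ × ℕ × (Fin n → ℕ)).2.1 + (t : ℕ × ℕ × (Fin n → ℕ)).1
                    = m + l₀ - μ₀ := hc
                omega
              rw [Finsupp.single_eq_of_ne' hidx]
        rw [Finset.sum_congr rfl (fun t _ => by rw [h3 t])] at h2
        have h5 := congrArg (fun z : L => z ^ p ^ (e * ν)) h2
        simp only [zero_pow (pow_ne_zero _ hp.ne_zero)] at h5
        rw [sum_pow_char_pow] at h5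
        refine Eq.trans (Finset.sum_congr rfl fun t _ => ?_) h5
        rw [hqν, mul_pow (g t), apply_ite (fun z : L => z ^ q ^ ν),
          zero_pow (pow_ne_zero _ hq0), mul_ite, mul_zero]
        split_ifs with hcond
        · congr 1
          have hμν : t.1.2.1 ≤ ν := by have := hbnd t; omega
          have hexp : t.1.1 + ν = t.1.2.1 + E := by omega
          symm
          rw [← pow_mul, ← pow_add, hexp, pow_add, pow_mul,
            Rcoef_pow root x q hroot1]
        · rfl
    -- Phase 2 : separate the Δ-multi-indices
    set Fd : Finset F := Finset.univ.filter
      (fun t : F => t.1.1 + μ₀ = t.1.2.1 + l₀) with hFd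
    have key2 : ∀ m : ℕ, ∑ t ∈ Fd.filter (fun t : F => t.1.2.2 = iv₀),
        g t ^ q ^ ν * (Acoef x q t.1.2.1 m) ^ q ^ E = 0 := by
      intro m
      have hB : Function.Injective (fun K : ℕ => br x q K ^ q ^ E) :=
        fun a b hab => hbr_inj (hpowE E hab)
      refine sep_prod (fun K => br x q K ^ q ^ E) hB Fd
        (fun t => g t ^ q ^ ν * (Acoef x q t.1.2.1 m) ^ q ^ E)
        (fun t => t.1.2.2) m ?_ iv₀
      intro k hk
      have h6 := key1 m k hk
      rw [← Finset.sum_filter] at h6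
      rw [← h6]
      apply Finset.sum_congr rfl
      intro t _
      rw [mul_pow, ← mul_assoc]
      congr 1
      rw [← Finset.prod_pow]
      apply Finset.prod_congr rfl
      intro j _
      rw [pow_right_comm]
    -- Phase 3 : triangular system in μ
    have hG2mem : (⟨(l₀, μ₀, iv₀), ht₀F⟩ : F) ∈
        Fd.filter (fun t : F => t.1.2.2 = iv₀) := by
      rw [Finset.mem_filter, hFd, Finset.mem_filter]
      exact ⟨⟨Finset.mem_univ _, Nat.add_comm l₀ μ₀⟩, rfl⟩
    have key3 : ∀ M : ℕ, ∀ t ∈ Fd.filter (fun t : F => t.1.2.2 = iv₀),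
        t.1.2.1 = M → g t ^ q ^ ν = 0 := by
      intro M
      induction M using Nat.strong_induction_on with
      | _ M ih =>
        intro t htG htM
        have h7 := key2 M
        have hside : ∀ b ∈ Fd.filter (fun t : F => t.1.2.2 = iv₀), b ≠ t →
            g b ^ q ^ ν * (Acoef x q b.1.2.1 M) ^ q ^ E = 0 := by
          intro b hbG hbt
          rcases lt_trichotomy b.1.2.1 M with hlt | heq | hgt
          · rw [ih b.1.2.1 hlt b hbG rfl, zero_mul]
          · exfalso
            apply hbt
            have h8 := Finset.mem_filter.mp hbG
            have h9 : b.1.1 + μ₀ = b.1.2.1 + l₀ := by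
              have hb1 := h8.1
              rw [hFd, Finset.mem_filter] at hb1
              exact hb1.2
            have h10 := Finset.mem_filter.mp htG
            have h11 : t.1.1 + μ₀ = t.1.2.1 + l₀ := by
              have ht1 := h10.1
              rw [hFd, Finset.mem_filter] at ht1
              exact ht1.2
            apply Subtype.ext
            apply Prod.ext
            · omega
            · apply Prod.ext
              · show b.1.2.1 = t.1.2.1
                omega
              · rw [h8.2, h10.2]
          · rw [Acoef_eq_zero x q hq0 _ _ hgt,
              zero_pow (pow_ne_zero _ hq0), mul_zero]
        rw [Finset.sum_eq_single_of_mem t htG hside] at h7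
        rw [htM] at h7
        rcases mul_eq_zero.mp h7 with h | h
        · exact h
        · exact absurd h (pow_ne_zero _ (Acoef_ne_zero x q hbr_ne M M le_rfl))
    have h12 := key3 μ₀ _ hG2mem rfl
    exact pow_eq_zero_iff (pow_ne_zero ν hq0) |>.mp h12
  -- conclusion : dimension count
  rw [hset, finrank_span_eq_card hLI, Fintype.card_coe]
  have hc2 : ν + n + 2 = ν + (n + 2) := by omega
  have hcount := count_le (n + 2) ν
  rw [hc2, ← hcount]
  exact card_F n ν F hmemF
end

section
/- Let π ∈ F_q[x] be a monic irreducible polynomial of degree δ, and let 0 ≤ m ≤ k. Write m = jδ + i and k − m = κδ + λ with j, κ ≥ 0 and 0 ≤ i, λ < δ. Then the π-adic valuation of the K-binomial coefficient is: v_π(binom(k,m)_K) = q^i·(q^λ − 1)·(q^{jδ} − 1)/(q^δ − 1) if i + λ < δ; and v_π(binom(k,m)_K) = (q^i + q^{i+λ+jδ} − q^{i+jδ} − q^{i+λ−δ})/(q^δ − 1) if i + λ ≥ δ. In both cases the valuation is a nonnegative integer. -/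
noncomputable section

open Polynomial

/-- The Carlitz factorial `D_i = [i]·[i-1]^q ⋯ [1]^{q^{i-1}} ∈ F_q[x]`
(where `[i] = x^{q^i} - x`), defined via `D_0 = 1`, `D_{i+1} = [i+1]·D_i^q`. -/
def Dcar (q : ℕ) (F : Type) [Field F] : ℕ → Polynomial F
  | 0 => 1
  | i + 1 => (X ^ q ^ (i + 1) - X) * (Dcar q F i) ^ q

/-- `L_i = [i]·[i-1] ⋯ [1] ∈ F_q[x]`, via `L_0 = 1`, `L_{i+1} = [i+1]·L_i`. -/
def Lcar (q : ℕ) (F : Type) [Field F] : ℕ → Polynomial F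
  | 0 => 1
  | i + 1 => (X ^ q ^ (i + 1) - X) * Lcar q F i

/-- The `K`-binomial coefficient `binom(k,m)_K = D_k/(D_m · D_{k-m}^{q^m}) ∈ F_q(x)`
for `0 ≤ m ≤ k`, with the convention that it vanishes for `m < 0` or `m > k`. -/
def Kb (q : ℕ) (F : Type) [Field F] (k : ℕ) (m : ℤ) : RatFunc F :=
  if 0 ≤ m ∧ m ≤ (k : ℤ) then
    algebraMap (Polynomial F) (RatFunc F) (Dcar q F k) /
      (algebraMap (Polynomial F) (RatFunc F) (Dcar q F m.toNat) *
        algebraMap (Polynomial F) (RatFunc F) (Dcar q F (k - m.toNat)) ^ q ^ m.toNat)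
  else 0

/-- The `π`-adic additive valuation `v_π` on `F_q(x)`, normalized by `v_π(π) = 1`
(for `π` irreducible): the multiplicity of `π` in the numerator minus the
multiplicity of `π` in the denominator. -/
def vpol {F : Type} [Field F] (π : Polynomial F) (t : RatFunc F) : ℤ :=
  (multiplicity π t.num : ℤ) - (multiplicity π t.denom : ℤ)

lemma pi_dvd_bracket_iff
    (p e : ℕ) [Fact p.Prime] (he : 0 < e) (q : ℕ) (hq : q = p ^ e)
    (π : Polynomial (GaloisField p e)) (hirr : Irreducible π) (n : ℕ) :
    π ∣ (X ^ q ^ n - X) ↔ π.natDegree ∣ n := by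
  haveI := Fact.mk hirr
  set K := GaloisField p e with hK
  set δ := π.natDegree with hδ
  have hppr : p.Prime := Fact.out
  have hq2 : 2 ≤ q := by rw [hq]; exact Nat.one_lt_pow he.ne' hppr.one_lt
  have hδpos : 0 < δ := hirr.natDegree_pos
  set L := AdjoinRoot π with hL
  haveI : Fintype K := Fintype.ofFinite K
  have hcardK : Fintype.card K = q := by
    rw [← Nat.card_eq_fintype_card, GaloisField.card p e he.ne', hq]
  haveI : Module.Finite K L := (AdjoinRoot.powerBasis hirr.ne_zero).finite
  haveI : Finite L := Module.finite_of_finite K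
  haveI : Fintype L := Fintype.ofFinite L
  have hcardL : Fintype.card L = q ^ δ := by
    rw [Module.card_eq_pow_finrank (K := K), hcardK, (AdjoinRoot.powerBasis hirr.ne_zero).finrank, AdjoinRoot.powerBasis_dim]
  set α := AdjoinRoot.root π with hα
  -- α ^ q ^ (multiple of δ) = α
  have hfix : ∀ t : ℕ, ∀ x : L, x ^ q ^ (δ * t) = x := by
    intro t x
    have := FiniteField.pow_card_pow (K := L) t x
    rwa [hcardL, ← pow_mul] at this
  have hdvd_iff : π ∣ (X ^ q ^ n - X) ↔ α ^ q ^ n = α := by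
    rw [← AdjoinRoot.mk_eq_zero, map_sub, map_pow, AdjoinRoot.mk_X, sub_eq_zero]
  rw [hdvd_iff]
  constructor
  · intro hroot
    set r := n % δ with hr
    have hrδ : r < δ := Nat.mod_lt _ hδpos
    have hαr : α ^ q ^ r = α := by
      have hn : n = δ * (n / δ) + r := (Nat.div_add_mod n δ).symm
      calc α ^ q ^ r = (α ^ q ^ (δ * (n / δ))) ^ q ^ r := by rw [hfix]
      _ = α ^ q ^ n := by rw [← pow_mul, ← pow_add, ← hn]
      _ = α := hroot
    by_contra hnd
    have hr0 : r ≠ 0 := fun h => hnd (Nat.dvd_of_mod_eq_zero h)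
    -- every element of L is fixed by x ↦ x ^ q ^ r
    haveI : CharP L p := charP_of_injective_algebraMap (algebraMap K L).injective p
    have hall : ∀ x : L, x ^ q ^ r = x := by
      intro x
      have hx : x ∈ Algebra.adjoin K ({α} : Set L) := by
        rw [AdjoinRoot.adjoinRoot_eq_top]; trivial
      have hqr : q ^ r = p ^ (e * r) := by rw [hq, ← pow_mul]
      induction hx using Algebra.adjoin_induction with
      | mem y hy => rw [Set.mem_singleton_iff] at hy; rw [hy]; exact hαr
      | algebraMap a =>
          rw [← map_pow]
          congr 1
          have := FiniteField.pow_card_pow (K := K) r a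
          rwa [hcardK] at this
      | add x y _ _ ihx ihy => rw [hqr, add_pow_char_pow, ← hqr, ihx, ihy]
      | mul x y _ _ ihx ihy => rw [mul_pow, ihx, ihy]
    -- contradiction via counting roots
    have hle : Fintype.card L ≤ q ^ r := by
      have hne : (X ^ q ^ r - X : Polynomial L) ≠ 0 := by
        have : (X ^ q ^ r - X : Polynomial L) = X ^ (q ^ r) ^ 1 - X := by
          rw [pow_one]
        rw [this]
        exact FiniteField.X_pow_card_pow_sub_X_ne_zero _ one_ne_zero
          (Nat.one_lt_pow hr0 (by omega))
      have hsub : (Finset.univ : Finset L) ⊆ (X ^ q ^ r - X : Polynomial L).roots.toFinset := by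
        intro x _
        rw [Multiset.mem_toFinset, mem_roots hne]
        simp [IsRoot, hall x]
      calc Fintype.card L = (Finset.univ : Finset L).card := rfl
      _ ≤ (X ^ q ^ r - X : Polynomial L).roots.toFinset.card := Finset.card_le_card hsub
      _ ≤ Multiset.card (X ^ q ^ r - X : Polynomial L).roots := Multiset.toFinset_card_le _
      _ ≤ (X ^ q ^ r - X : Polynomial L).natDegree := (X ^ q ^ r - X : Polynomial L).card_roots'
      _ = q ^ r := by
          have : (X ^ q ^ r - X : Polynomial L) = X ^ (q ^ r) ^ 1 - X := by rw [pow_one]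
          rw [this, FiniteField.X_pow_card_pow_sub_X_natDegree_eq _ one_ne_zero
            (Nat.one_lt_pow hr0 (by omega)), pow_one]
    rw [hcardL] at hle
    have := (Nat.pow_le_pow_iff_right (by omega : 1 < q)).mp hle
    omega
  · rintro ⟨t, rfl⟩
    exact hfix t α

lemma Dcar_ne_zero {F : Type} [Field F] {q : ℕ} (hq : 2 ≤ q) (n : ℕ) :
    Dcar q F n ≠ 0 := by
  induction n with
  | zero => simp [Dcar]
  | succ n ih =>
      have h1 : (X ^ q ^ (n + 1) - X : Polynomial F) ≠ 0 :=
        FiniteField.X_pow_card_pow_sub_X_ne_zero _ n.succ_ne_zero (by omega)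
      exact mul_ne_zero h1 (pow_ne_zero _ ih)

lemma mult_bracket
    (p e : ℕ) [Fact p.Prime] (he : 0 < e) (q : ℕ) (hq : q = p ^ e)
    (π : Polynomial (GaloisField p e)) (hirr : Irreducible π) (n : ℕ) (hn : n ≠ 0) :
    multiplicity π (X ^ q ^ n - X : Polynomial (GaloisField p e))
      = if π.natDegree ∣ n then 1 else 0 := by
  have hppr : p.Prime := Fact.out
  have hq2 : 2 ≤ q := by rw [hq]; exact Nat.one_lt_pow he.ne' hppr.one_lt
  have hne : (X ^ q ^ n - X : Polynomial (GaloisField p e)) ≠ 0 :=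
    FiniteField.X_pow_card_pow_sub_X_ne_zero _ hn (by omega)
  have hfin : FiniteMultiplicity π (X ^ q ^ n - X : Polynomial (GaloisField p e)) :=
    FiniteMultiplicity.of_not_isUnit hirr.not_isUnit hne
  split_ifs with hd
  · rw [hfin.multiplicity_eq_iff]
    refine ⟨by simpa using (pi_dvd_bracket_iff p e he q hq π hirr n).mpr hd, ?_⟩
    intro hsq
    have hsep : (X ^ q ^ n - X : Polynomial (GaloisField p e)).Separable := by
      rw [separable_def]
      have hc : ((q ^ n : ℕ) : GaloisField p e) = 0 := by
        rw [hq, ← pow_mul, Nat.cast_pow, CharP.cast_eq_zero (GaloisField p e) p,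
          zero_pow (by positivity)]
      have hder : derivative (X ^ q ^ n - X : Polynomial (GaloisField p e)) = -1 := by
        rw [derivative_sub, derivative_X_pow, derivative_X, hc, map_zero, zero_mul,
          zero_sub]
      rw [hder]
      exact (isCoprime_one_right).neg_right
    have hsqf := hsep.squarefree
    exact hirr.not_isUnit (hsqf π (by simpa [pow_two] using hsq))
  · exact multiplicity_eq_zero.mpr
      (fun h => hd ((pi_dvd_bracket_iff p e he q hq π hirr n).mp h))

/-- `scar q δ n` is the multiplicity of a degree-`δ` prime in `Dcar q F n`. -/
def scar (q δ : ℕ) : ℕ → ℕ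
  | 0 => 0
  | n + 1 => (if δ ∣ (n + 1) then 1 else 0) + q * scar q δ n

lemma mult_Dcar
    (p e : ℕ) [Fact p.Prime] (he : 0 < e) (q : ℕ) (hq : q = p ^ e)
    (π : Polynomial (GaloisField p e)) (hirr : Irreducible π) (hp : Prime π) (n : ℕ) :
    multiplicity π (Dcar q (GaloisField p e) n) = scar q π.natDegree n := by
  have hppr : p.Prime := Fact.out
  have hq2 : 2 ≤ q := by rw [hq]; exact Nat.one_lt_pow he.ne' hppr.one_lt
  induction n with
  | zero =>
      rw [show Dcar q (GaloisField p e) 0 = 1 from rfl, scar]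
      exact multiplicity_eq_zero.mpr (fun h => hirr.not_isUnit (isUnit_of_dvd_one h))
  | succ n ih =>
      have hb : (X ^ q ^ (n + 1) - X : Polynomial (GaloisField p e)) ≠ 0 :=
        FiniteField.X_pow_card_pow_sub_X_ne_zero _ n.succ_ne_zero (by omega)
      have hD := Dcar_ne_zero (F := GaloisField p e) hq2 n
      have hfin : FiniteMultiplicity π
          ((X ^ q ^ (n + 1) - X) * (Dcar q (GaloisField p e) n) ^ q) :=
        FiniteMultiplicity.of_not_isUnit hirr.not_isUnit
          (mul_ne_zero hb (pow_ne_zero _ hD))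
      rw [show Dcar q (GaloisField p e) (n + 1)
          = (X ^ q ^ (n + 1) - X) * (Dcar q (GaloisField p e) n) ^ q from rfl,
        multiplicity_mul hp hfin,
        (FiniteMultiplicity.of_not_isUnit hirr.not_isUnit hD).multiplicity_pow hp,
        mult_bracket p e he q hq π hirr (n + 1) n.succ_ne_zero, ih, scar]

lemma scar_formula (q δ : ℕ) (hq : 2 ≤ q) (hδ : 0 < δ) (n : ℕ) :
    (scar q δ n : ℤ) * ((q : ℤ) ^ δ - 1)
      = (q : ℤ) ^ (n % δ) * ((q : ℤ) ^ (δ * (n / δ)) - 1) := by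
  induction n with
  | zero => simp [scar]
  | succ n ih =>
      by_cases hd : δ ∣ (n + 1)
      · obtain ⟨t, ht⟩ := hd
        obtain ⟨s, rfl⟩ : ∃ s, t = s + 1 := by
          rcases t with _ | s
          · omega
          · exact ⟨s, rfl⟩
        obtain ⟨d, rfl⟩ : ∃ d, δ = d + 1 := ⟨δ - 1, by omega⟩
        have hexp : (d + 1) * (s + 1) = d + (d + 1) * s + 1 := by ring
        have hn : n = d + (d + 1) * s := by omega
        have hmod : n % (d + 1) = d := by
          rw [hn, Nat.add_mul_mod_self_left, Nat.mod_eq_of_lt (by omega)]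
        have hdiv : n / (d + 1) = s := by
          rw [hn, Nat.add_mul_div_left _ _ (by omega), Nat.div_eq_of_lt (by omega),
            zero_add]
        have hmod' : (n + 1) % (d + 1) = 0 := by rw [ht, Nat.mul_mod_right]
        have hdiv' : (n + 1) / (d + 1) = s + 1 := by
          rw [show n + 1 = 0 + (d + 1) * (s + 1) by omega,
            Nat.add_mul_div_left _ _ (by omega)]
          simp
        rw [scar, if_pos ⟨s + 1, ht⟩, hmod', hdiv']
        rw [hmod, hdiv] at ih
        push_cast
        linear_combination (q : ℤ) * ih
      · have hmod0 : n % δ + 1 < δ := by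
          have h1 : n % δ < δ := Nat.mod_lt _ hδ
          rcases Nat.lt_or_ge (n % δ + 1) δ with h | h
          · exact h
          · exfalso
            have : n % δ = δ - 1 := by omega
            have h2 := Nat.div_add_mod n δ
            have h3 : δ * (n / δ + 1) = δ * (n / δ) + δ := by ring
            exact hd ⟨n / δ + 1, by omega⟩
        have h2 := Nat.div_add_mod n δ
        have hmod' : (n + 1) % δ = n % δ + 1 := by
          rw [show n + 1 = (n % δ + 1) + δ * (n / δ) by omega,
            Nat.add_mul_mod_self_left, Nat.mod_eq_of_lt hmod0]
        have hdiv' : (n + 1) / δ = n / δ := by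
          rw [show n + 1 = (n % δ + 1) + δ * (n / δ) by omega,
            Nat.add_mul_div_left _ _ hδ, Nat.div_eq_of_lt hmod0, zero_add]
        rw [scar, if_neg hd, hmod', hdiv']
        push_cast
        linear_combination (q : ℤ) * ih

lemma vpol_div {F : Type} [Field F] {π A B : Polynomial F} (hp : Prime π)
    (hA : A ≠ 0) (hB : B ≠ 0) :
    vpol π (algebraMap (Polynomial F) (RatFunc F) A
        / algebraMap (Polynomial F) (RatFunc F) B)
      = (multiplicity π A : ℤ) - multiplicity π B := by
  set t := algebraMap (Polynomial F) (RatFunc F) A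
      / algebraMap (Polynomial F) (RatFunc F) B with htdef
  have hA' : algebraMap (Polynomial F) (RatFunc F) A ≠ 0 := by
    simpa using (RatFunc.algebraMap_ne_zero hA)
  have hB' : algebraMap (Polynomial F) (RatFunc F) B ≠ 0 := by
    simpa using (RatFunc.algebraMap_ne_zero hB)
  have ht : t ≠ 0 := div_ne_zero hA' hB'
  have hden : t.denom ≠ 0 := t.denom_ne_zero
  have hnum : t.num ≠ 0 := RatFunc.num_ne_zero ht
  have e1 : algebraMap (Polynomial F) (RatFunc F) t.num
      / algebraMap (Polynomial F) (RatFunc F) t.denom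
      = algebraMap (Polynomial F) (RatFunc F) A
      / algebraMap (Polynomial F) (RatFunc F) B := by
    rw [RatFunc.num_div_denom]
  rw [div_eq_div_iff (RatFunc.algebraMap_ne_zero hden) hB'] at e1
  rw [← map_mul, ← map_mul] at e1
  have key : t.num * B = A * t.denom := IsFractionRing.injective (Polynomial F) (RatFunc F) e1
  have m1 : multiplicity π (t.num * B) = multiplicity π t.num + multiplicity π B :=
    multiplicity_mul hp (FiniteMultiplicity.of_not_isUnit hp.not_isUnit (mul_ne_zero hnum hB))
  have m2 : multiplicity π (A * t.denom) = multiplicity π A + multiplicity π t.denom :=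
    multiplicity_mul hp (FiniteMultiplicity.of_not_isUnit hp.not_isUnit (mul_ne_zero hA hden))
  rw [key, m2] at m1
  unfold vpol
  omega

/-- **`π`-adic valuation of the `K`-binomial coefficients (proof of Proposition 4).**
For `π` monic irreducible of degree `δ`, `0 ≤ m ≤ k`, `m = jδ + i`,
`k − m = κδ + λ` with `0 ≤ i, λ < δ`:
if `i + λ < δ` then `v_π(binom(k,m)_K) = q^i(q^λ − 1)(q^{jδ} − 1)/(q^δ − 1)`,
and if `i + λ ≥ δ` then
`v_π(binom(k,m)_K) = (q^i + q^{i+λ+jδ} − q^{i+jδ} − q^{i+λ−δ})/(q^δ − 1)`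
(both stated in denominator-cleared form); in both cases the valuation is
nonnegative. -/
theorem vpol_Kbinom
    (p e q : ℕ) [Fact p.Prime] (he : 0 < e) (hq : q = p ^ e)
    (π : Polynomial (GaloisField p e)) (hmon : π.Monic) (hirr : Irreducible π)
    (δ : ℕ) (hδ : δ = π.natDegree)
    (k m j i κ lam : ℕ) (hmk : m ≤ k)
    (hm : m = j * δ + i) (hi : i < δ)
    (hkm : k - m = κ * δ + lam) (hlam : lam < δ) :
    (if i + lam < δ then
        vpol π (Kb q (GaloisField p e) k (m : ℤ)) * ((q : ℤ) ^ δ - 1)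
          = (q : ℤ) ^ i * ((q : ℤ) ^ lam - 1) * ((q : ℤ) ^ (j * δ) - 1)
      else
        vpol π (Kb q (GaloisField p e) k (m : ℤ)) * ((q : ℤ) ^ δ - 1)
          = (q : ℤ) ^ i + (q : ℤ) ^ (i + lam + j * δ)
            - (q : ℤ) ^ (i + j * δ) - (q : ℤ) ^ (i + lam - δ)) ∧
    0 ≤ vpol π (Kb q (GaloisField p e) k (m : ℤ)) := by
  have hppr : p.Prime := Fact.out
  have hq2 : 2 ≤ q := by rw [hq]; exact Nat.one_lt_pow he.ne' hppr.one_lt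
  have hδpos : 0 < δ := by omega
  have hp : Prime π := (UniqueFactorizationMonoid.irreducible_iff_prime).mp hirr
  have hQ1 : (1 : ℤ) ≤ (q : ℤ) := by exact_mod_cast (by omega : 1 ≤ q)
  have hKb : Kb q (GaloisField p e) k (m : ℤ)
      = algebraMap (Polynomial (GaloisField p e)) (RatFunc (GaloisField p e))
          (Dcar q (GaloisField p e) k)
        / algebraMap (Polynomial (GaloisField p e)) (RatFunc (GaloisField p e))
          (Dcar q (GaloisField p e) m
            * Dcar q (GaloisField p e) (k - m) ^ q ^ m) := by
    rw [Kb, if_pos ⟨Int.natCast_nonneg m, by exact_mod_cast hmk⟩, Int.toNat_natCast,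
      map_mul, map_pow]
  have hv : vpol π (Kb q (GaloisField p e) k (m : ℤ))
      = (scar q δ k : ℤ) - ((scar q δ m : ℤ) + (q : ℤ) ^ m * (scar q δ (k - m) : ℤ)) := by
    rw [hKb, vpol_div hp (Dcar_ne_zero hq2 k)
        (mul_ne_zero (Dcar_ne_zero hq2 m) (pow_ne_zero _ (Dcar_ne_zero hq2 (k - m)))),
      multiplicity_mul hp (FiniteMultiplicity.of_not_isUnit hp.not_isUnit
        (mul_ne_zero (Dcar_ne_zero hq2 m) (pow_ne_zero _ (Dcar_ne_zero hq2 (k - m))))),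
      (FiniteMultiplicity.of_not_isUnit hp.not_isUnit
        (Dcar_ne_zero hq2 (k - m))).multiplicity_pow hp,
      mult_Dcar p e he q hq π hirr hp k, mult_Dcar p e he q hq π hirr hp m,
      mult_Dcar p e he q hq π hirr hp (k - m), ← hδ]
    push_cast
    ring
  -- mod / div computations
  have hm' : m = i + δ * j := by
    have : j * δ = δ * j := by ring
    omega
  have hkm' : k - m = lam + δ * κ := by
    have : κ * δ = δ * κ := by ring
    omega
  have hmodm : m % δ = i := by
    rw [hm', Nat.add_mul_mod_self_left, Nat.mod_eq_of_lt hi]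
  have hdivm : m / δ = j := by
    rw [hm', Nat.add_mul_div_left _ _ hδpos, Nat.div_eq_of_lt hi, zero_add]
  have hmodkm : (k - m) % δ = lam := by
    rw [hkm', Nat.add_mul_mod_self_left, Nat.mod_eq_of_lt hlam]
  have hdivkm : (k - m) / δ = κ := by
    rw [hkm', Nat.add_mul_div_left _ _ hδpos, Nat.div_eq_of_lt hlam, zero_add]
  have fm := scar_formula q δ hq2 hδpos m
  have fkm := scar_formula q δ hq2 hδpos (k - m)
  have fk := scar_formula q δ hq2 hδpos k
  rw [hmodm, hdivm] at fm
  rw [hmodkm, hdivkm] at fkm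
  have hqm : (q : ℤ) ^ m = (q : ℤ) ^ (j * δ) * (q : ℤ) ^ i := by
    rw [hm, pow_add]
  have hc : (0 : ℤ) < (q : ℤ) ^ δ - 1 := by
    have : (1 : ℤ) < (q : ℤ) ^ δ := by
      exact_mod_cast Nat.one_lt_pow hδpos.ne' (by omega : 1 < q)
    omega
  by_cases hcase : i + lam < δ
  · -- k = (i + lam) + δ * (j + κ)
    have hk : k = (i + lam) + δ * (j + κ) := by
      have h1 : δ * (j + κ) = δ * j + δ * κ := by ring
      omega
    have hmodk : k % δ = i + lam := by
      rw [hk, Nat.add_mul_mod_self_left, Nat.mod_eq_of_lt hcase]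
    have hdivk : k / δ = j + κ := by
      rw [hk, Nat.add_mul_div_left _ _ hδpos, Nat.div_eq_of_lt hcase, zero_add]
    rw [hmodk, hdivk] at fk
    have hmain : vpol π (Kb q (GaloisField p e) k (m : ℤ)) * ((q : ℤ) ^ δ - 1)
        = (q : ℤ) ^ i * ((q : ℤ) ^ lam - 1) * ((q : ℤ) ^ (j * δ) - 1) := by
      rw [hv, hqm]
      linear_combination fk - fm - (q : ℤ) ^ (j * δ) * (q : ℤ) ^ i * fkm
    refine ⟨by rw [if_pos hcase]; exact hmain, ?_⟩
    have hR : (0 : ℤ) ≤ (q : ℤ) ^ i * ((q : ℤ) ^ lam - 1) * ((q : ℤ) ^ (j * δ) - 1) := by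
      have h1 : (1 : ℤ) ≤ (q : ℤ) ^ lam := by
        exact_mod_cast Nat.one_le_pow lam q (by omega)
      have h2 : (1 : ℤ) ≤ (q : ℤ) ^ (j * δ) := by
        exact_mod_cast Nat.one_le_pow (j * δ) q (by omega)
      have h3 : (0 : ℤ) ≤ (q : ℤ) ^ i := by positivity
      exact mul_nonneg (mul_nonneg h3 (by linarith)) (by linarith)
    by_contra hneg
    push_neg at hneg
    have := mul_neg_of_neg_of_pos hneg hc
    linarith
  · -- case i + lam ≥ δ
    obtain ⟨t, ht⟩ : ∃ t, δ = i + t := ⟨δ - i, by omega⟩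
    obtain ⟨r, hr⟩ : ∃ r, lam = t + r := ⟨lam - t, by omega⟩
    have hrsub : i + lam - δ = r := by omega
    have hk : k = r + δ * (j + κ + 1) := by
      have h1 : δ * (j + κ + 1) = δ * j + δ * κ + δ := by ring
      omega
    have hmodk : k % δ = r := by
      rw [hk, Nat.add_mul_mod_self_left, Nat.mod_eq_of_lt (by omega)]
    have hdivk : k / δ = j + κ + 1 := by
      rw [hk, Nat.add_mul_div_left _ _ hδpos, Nat.div_eq_of_lt (by omega), zero_add]
    rw [hmodk, hdivk] at fk
    have hmain : vpol π (Kb q (GaloisField p e) k (m : ℤ)) * ((q : ℤ) ^ δ - 1)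
        = (q : ℤ) ^ i + (q : ℤ) ^ (i + lam + j * δ)
          - (q : ℤ) ^ (i + j * δ) - (q : ℤ) ^ (i + lam - δ) := by
      rw [hv, hqm, hrsub]
      rw [ht, hr] at fkm
      rw [ht] at fk fm
      rw [ht, hr]
      linear_combination fk - fm - (q : ℤ) ^ (j * (i + t)) * (q : ℤ) ^ i * fkm
    refine ⟨by rw [if_neg hcase]; exact hmain, ?_⟩
    have hR : (0 : ℤ) ≤ (q : ℤ) ^ i + (q : ℤ) ^ (i + lam + j * δ)
        - (q : ℤ) ^ (i + j * δ) - (q : ℤ) ^ (i + lam - δ) := by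
      have h1 : (q : ℤ) ^ (i + j * δ) ≤ (q : ℤ) ^ (i + lam + j * δ) := by
        exact_mod_cast Nat.pow_le_pow_right (by omega : 1 ≤ q) (by omega)
      have h2 : (q : ℤ) ^ (i + lam - δ) ≤ (q : ℤ) ^ i := by
        exact_mod_cast Nat.pow_le_pow_right (by omega : 1 ≤ q) (by omega)
      linarith
    by_contra hneg
    push_neg at hneg
    have := mul_neg_of_neg_of_pos hneg hc
    linarith
end
end

section
/- Every map F̂_{n+1} → F̂_{n+1} obtained as a finite composition of operators from the set {τ, d_s, Δ₁, …, Δ_n} together with scalar-multiplication operators f ↦ λ·f (λ ∈ L) lies in the L-linear span (inside Maps(F̂_{n+1}, F̂_{n+1})) of the monomial operators τ^l ∘ d_s^μ ∘ Δ₁^{i₁} ∘ … ∘ Δ_n^{i_n}; that is, every element of the Carlitz ring 𝔄_{n+1} can be written as a finite sum Σ c_{l,μ,i₁,…,i_n}·τ^l d_s^μ Δ₁^{i₁} ⋯ Δ_n^{i_n} with coefficients in L. -/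
/-! ### Auxiliary lemmas -/

section CarlitzAux
set_option linter.unusedSectionVars false

variable {p e q : ℕ} [Fact p.Prime] {L : Type} [Field L] [CharP L p]

lemma cq_ne_zero (hq : q = p ^ e) : q ≠ 0 := by
  subst hq; exact pow_ne_zero _ (Fact.out (p := p.Prime)).pos.ne'

lemma cq_add_pow (hq : q = p ^ e) (a b : L) : (a + b) ^ q = a ^ q + b ^ q := by
  subst hq; exact add_pow_char_pow a b p e

lemma cq_inj (hq : q = p ^ e) {a b : L} (h : a ^ q = b ^ q) : a = b := by
  have h2 : (a - b) ^ q = 0 := by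
    subst hq; rw [sub_pow_char_pow, h, sub_self]
  exact sub_eq_zero.mp ((pow_eq_zero_iff (cq_ne_zero hq)).mp h2)

section Root

variable (hq : q = p ^ e) (root : L → L) (hroot1 : ∀ c, root c ^ q = c)
include hq hroot1

lemma root_zero : root 0 = 0 :=
  cq_inj hq (by rw [hroot1, zero_pow (cq_ne_zero hq)])

lemma root_add (a b : L) : root (a + b) = root a + root b :=
  cq_inj hq (by rw [hroot1, cq_add_pow hq, hroot1, hroot1])

lemma root_mul (a b : L) : root (a * b) = root a * root b :=
  cq_inj hq (by rw [hroot1, mul_pow, hroot1, hroot1])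

lemma root_powq (a : L) : root (a ^ q) = a := cq_inj hq (hroot1 _)

end Root

/-! Bracket identities: `[m+1] = [m]^q + [1]`. -/

lemma bracket_succ (hq : q = p ^ e) (x : L) (m : ℕ) :
    x ^ q ^ (m + 1) - x = (x ^ q ^ m - x) ^ q + (x ^ q - x) := by
  have h1 : (x ^ q ^ m) ^ q = x ^ q ^ (m + 1) := by rw [← pow_mul, ← pow_succ]
  have h2 : (x ^ q ^ m - x) ^ q = (x ^ q ^ m) ^ q - x ^ q := by
    subst hq; exact sub_pow_char_pow _ _ _
  rw [h2, h1]; ring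

lemma root_bracket_succ (hq : q = p ^ e) (root : L → L) (hroot1 : ∀ c, root c ^ q = c)
    (x : L) (m : ℕ) :
    root (x ^ q ^ (m + 1) - x) = (x ^ q ^ m - x) + root (x ^ q - x) := by
  refine cq_inj hq ?_
  rw [hroot1, cq_add_pow hq, hroot1, bracket_succ hq]

lemma bracket_zero (x : L) : x ^ q ^ 0 - x = 0 := by rw [pow_zero, pow_one, sub_self]

/-! ### Index lemmas -/

lemma shiftDown_shiftUp {n : ℕ} (i : CIdx n) : shiftDown (shiftUp i) = i := by
  obtain ⟨⟨m, k⟩, hi⟩ := i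
  apply Subtype.ext
  simp [shiftUp, shiftDown]

lemma shiftUp_shiftDown {n : ℕ} (i : CIdx n) (h : 1 ≤ i.1.1) : shiftUp (shiftDown i) = i := by
  obtain ⟨⟨m, k⟩, hi⟩ := i
  simp only [shiftUp, shiftDown]
  apply Subtype.ext
  simp only at h ⊢
  have h1 : m - 1 + 1 = m := by omega
  have h2 : ∀ j, k j - 1 + 1 = k j := fun j => by have := hi j; simp only at this; omega
  exact Prod.ext h1 (funext h2)

/-! ### Action on singles, additivity, semilinearity -/

section Ops

variable (hq : q = p ^ e) (root : L → L) (hroot1 : ∀ c, root c ^ q = c)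
variable (x : L) (n : ℕ)

include hq in
lemma tau_single (i : CIdx n) (a : L) :
    tauOp L q n (Finsupp.single i a) = Finsupp.single (shiftUp i) (a ^ q) := by
  unfold tauOp
  exact Finsupp.sum_single_index (by rw [zero_pow (cq_ne_zero hq), Finsupp.single_zero])

lemma tau_zero : tauOp L q n 0 = 0 := Finsupp.sum_zero_index

include hq in
lemma tau_add (f g : CIdx n →₀ L) :
    tauOp L q n (f + g) = tauOp L q n f + tauOp L q n g := by
  unfold tauOp
  exact Finsupp.sum_add_index'
    (fun i => by rw [zero_pow (cq_ne_zero hq), Finsupp.single_zero])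
    (fun i b c => by rw [cq_add_pow hq, Finsupp.single_add])

include hq in
lemma tau_smul (c : L) (f : CIdx n →₀ L) :
    tauOp L q n (c • f) = c ^ q • tauOp L q n f := by
  unfold tauOp
  rw [Finsupp.sum_smul_index
      (fun i => by rw [zero_pow (cq_ne_zero hq), Finsupp.single_zero]),
    Finsupp.smul_sum]
  exact Finsupp.sum_congr fun i _ => by rw [mul_pow, Finsupp.smul_single']

include hq hroot1 in
lemma ds_single (i : CIdx n) (a : L) :
    dsOp L root x q n (Finsupp.single i a)
      = Finsupp.single (shiftDown i) (root (x ^ q ^ i.1.1 - x) * root a) := by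
  unfold dsOp
  exact Finsupp.sum_single_index
    (by rw [root_zero hq root hroot1, mul_zero, Finsupp.single_zero])

lemma ds_zero : dsOp L root x q n 0 = 0 := Finsupp.sum_zero_index

include hq hroot1 in
lemma ds_add (f g : CIdx n →₀ L) :
    dsOp L root x q n (f + g) = dsOp L root x q n f + dsOp L root x q n g := by
  unfold dsOp
  exact Finsupp.sum_add_index'
    (fun i => by rw [root_zero hq root hroot1, mul_zero, Finsupp.single_zero])
    (fun i b c => by
      rw [root_add hq root hroot1, mul_add, Finsupp.single_add])

include hq hroot1 in
lemma ds_smul (c : L) (f : CIdx n →₀ L) :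
    dsOp L root x q n (c • f) = root c • dsOp L root x q n f := by
  unfold dsOp
  rw [Finsupp.sum_smul_index
      (fun i => by rw [root_zero hq root hroot1, mul_zero, Finsupp.single_zero]),
    Finsupp.smul_sum]
  refine Finsupp.sum_congr fun i _ => ?_
  rw [root_mul hq root hroot1, Finsupp.smul_single']
  ring_nf

lemma delta_single (j : Fin n) (i : CIdx n) (a : L) :
    deltaOp L x q n j (Finsupp.single i a)
      = Finsupp.single i ((x ^ q ^ i.1.2 j - x) * a) := by
  unfold deltaOp
  exact Finsupp.sum_single_index (by rw [mul_zero, Finsupp.single_zero])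

lemma delta_zero (j : Fin n) : deltaOp L x q n j 0 = 0 := Finsupp.sum_zero_index

lemma delta_add (j : Fin n) (f g : CIdx n →₀ L) :
    deltaOp L x q n j (f + g) = deltaOp L x q n j f + deltaOp L x q n j g := by
  unfold deltaOp
  exact Finsupp.sum_add_index'
    (fun i => by rw [mul_zero, Finsupp.single_zero])
    (fun i b c => by rw [mul_add, Finsupp.single_add])

lemma delta_smul (j : Fin n) (c : L) (f : CIdx n →₀ L) :
    deltaOp L x q n j (c • f) = c • deltaOp L x q n j f := by
  unfold deltaOp
  rw [Finsupp.sum_smul_index (fun i => by rw [mul_zero, Finsupp.single_zero]),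
    Finsupp.smul_sum]
  refine Finsupp.sum_congr fun i _ => ?_
  rw [Finsupp.smul_single']
  ring_nf

end Ops

/-! ### Extensionality for additive operators -/

lemma op_ext {n : ℕ} {A B : (CIdx n →₀ L) → (CIdx n →₀ L)}
    (hA0 : A 0 = 0) (hB0 : B 0 = 0)
    (hAadd : ∀ f g, A (f + g) = A f + A g)
    (hBadd : ∀ f g, B (f + g) = B f + B g)
    (hs : ∀ i a, A (Finsupp.single i a) = B (Finsupp.single i a)) (f : CIdx n →₀ L) :
    A f = B f := by
  refine Finsupp.induction f (by rw [hA0, hB0]) ?_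
  intro i b f _ _ ih
  rw [hAadd, hBadd, hs, ih]

/-! ### Commutation relations -/

section Rels

variable (hq : q = p ^ e) (root : L → L) (hroot1 : ∀ c, root c ^ q = c)
variable (x : L) (n : ℕ)

include hq hroot1 in
lemma ds_tau_rel (f : CIdx n →₀ L) :
    dsOp L root x q n (tauOp L q n f)
      = tauOp L q n (dsOp L root x q n f) + root (x ^ q - x) • f := by
  refine op_ext (A := fun f => dsOp L root x q n (tauOp L q n f))
    (B := fun f => tauOp L q n (dsOp L root x q n f) + root (x ^ q - x) • f)
    ?_ ?_ ?_ ?_ ?_ f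
  · rw [tau_zero, ds_zero]
  · rw [ds_zero, tau_zero, smul_zero, add_zero]
  · intro f g
    rw [tau_add hq, ds_add hq root hroot1]
  · intro f g
    rw [ds_add hq root hroot1, tau_add hq, smul_add]
    abel
  · intro i a
    rw [tau_single hq, ds_single hq root hroot1, shiftDown_shiftUp,
      root_powq hq root hroot1, ds_single hq root hroot1, tau_single hq,
      Finsupp.smul_single']
    obtain ⟨⟨m, k⟩, hi⟩ := i
    have hproj : ((shiftUp ⟨(m, k), hi⟩ : CIdx n).1.1) = m + 1 := rfl
    rw [hproj, root_bracket_succ hq root hroot1]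
    have hproj2 : ((⟨(m, k), hi⟩ : CIdx n).1.1) = m := rfl
    rw [hproj2]
    cases m with
    | zero =>
      rw [bracket_zero, root_zero hq root hroot1, zero_mul,
        zero_pow (cq_ne_zero hq), Finsupp.single_zero, zero_add, zero_add]
    | succ m' =>
      rw [shiftUp_shiftDown (⟨(m' + 1, k), hi⟩ : CIdx n) (Nat.succ_le_succ (Nat.zero_le _)), mul_pow,
        hroot1, hroot1, add_mul]
      exact Finsupp.single_add _ _ _

include hq in
lemma delta_tau_rel (j : Fin n) (f : CIdx n →₀ L) :
    deltaOp L x q n j (tauOp L q n f)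
      = tauOp L q n (deltaOp L x q n j f) + (x ^ q - x) • tauOp L q n f := by
  refine op_ext (A := fun f => deltaOp L x q n j (tauOp L q n f))
    (B := fun f => tauOp L q n (deltaOp L x q n j f) + (x ^ q - x) • tauOp L q n f)
    ?_ ?_ ?_ ?_ ?_ f
  · rw [tau_zero, delta_zero]
  · rw [delta_zero, tau_zero, smul_zero, add_zero]
  · intro f g
    rw [tau_add hq, delta_add]
  · intro f g
    rw [delta_add, tau_add hq, tau_add hq, smul_add]
    abel
  · intro i a
    rw [tau_single hq, delta_single, delta_single, tau_single hq, Finsupp.smul_single']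
    obtain ⟨⟨m, k⟩, hi⟩ := i
    have hproj : ∀ j', ((shiftUp ⟨(m, k), hi⟩ : CIdx n).1.2 j') = k j' + 1 := fun _ => rfl
    have hproj2 : ∀ j', ((⟨(m, k), hi⟩ : CIdx n).1.2 j') = k j' := fun _ => rfl
    rw [hproj, hproj2, ← Finsupp.single_add]
    congr 1
    rw [bracket_succ hq, mul_pow]
    ring

include hq hroot1 in
lemma delta_ds_rel (j : Fin n) (f : CIdx n →₀ L) :
    deltaOp L x q n j (dsOp L root x q n f)
      = dsOp L root x q n (deltaOp L x q n j f)
        - root (x ^ q - x) • dsOp L root x q n f := by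
  refine op_ext (A := fun f => deltaOp L x q n j (dsOp L root x q n f))
    (B := fun f => dsOp L root x q n (deltaOp L x q n j f)
      - root (x ^ q - x) • dsOp L root x q n f)
    ?_ ?_ ?_ ?_ ?_ f
  · rw [ds_zero, delta_zero]
  · rw [delta_zero, ds_zero, smul_zero, sub_zero]
  · intro f g
    rw [ds_add hq root hroot1, delta_add]
  · intro f g
    rw [delta_add, ds_add hq root hroot1, ds_add hq root hroot1, smul_add]
    abel
  · intro i a
    rw [ds_single hq root hroot1, delta_single, delta_single,
      ds_single hq root hroot1, Finsupp.smul_single', ← Finsupp.single_sub]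
    obtain ⟨⟨m, k⟩, hi⟩ := i
    have hproj : ∀ j', ((shiftDown ⟨(m, k), hi⟩ : CIdx n).1.2 j') = k j' - 1 :=
      fun _ => rfl
    have hproj2 : ((⟨(m, k), hi⟩ : CIdx n).1.1) = m := rfl
    rw [hproj, hproj2, root_mul hq root hroot1]
    congr 1
    cases m with
    | zero =>
      rw [bracket_zero, root_zero hq root hroot1]
      ring
    | succ m' =>
      have hk : k j - 1 + 1 = k j := Nat.succ_pred_eq_of_pos (lt_of_lt_of_le (Nat.succ_pos m') (hi j))
      have hkr : root (x ^ q ^ (k j) - x) = (x ^ q ^ (k j - 1) - x) + root (x ^ q - x) := by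
        conv_lhs => rw [← hk]
        exact root_bracket_succ hq root hroot1 x _
      rw [hkr]
      ring

lemma delta_comm (j j' : Fin n) (f : CIdx n →₀ L) :
    deltaOp L x q n j (deltaOp L x q n j' f)
      = deltaOp L x q n j' (deltaOp L x q n j f) := by
  refine op_ext (A := fun f => deltaOp L x q n j (deltaOp L x q n j' f))
    (B := fun f => deltaOp L x q n j' (deltaOp L x q n j f)) ?_ ?_ ?_ ?_ ?_ f
  · rw [delta_zero, delta_zero]
  · rw [delta_zero, delta_zero]
  · intro f g
    rw [delta_add, delta_add]
  · intro f g
    rw [delta_add, delta_add]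
  · intro i a
    rw [delta_single, delta_single, delta_single, delta_single]
    congr 1
    ring

end Rels

/-! ### Structural lemmas for products of the `Δ_j` -/

lemma foldr_id {α : Type} :
    ∀ l : List (α → α), (∀ T ∈ l, T = id) → l.foldr (· ∘ ·) id = id := by
  intro l
  induction l with
  | nil => intro _; rfl
  | cons a t ih =>
    intro h
    rw [List.foldr_cons, h a List.mem_cons_self, ih fun T hT => h T (List.mem_cons_of_mem a hT)]
    rfl

lemma foldr_map_update {α : Type} {n : ℕ} (g : Fin n → α → α) (T : α → α) (j : Fin n)
    (hcomm : ∀ j', T ∘ g j' = g j' ∘ T) :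
    ∀ l : List (Fin n), l.Nodup → j ∈ l →
      (l.map (Function.update g j (T ∘ g j))).foldr (· ∘ ·) id
        = T ∘ (l.map g).foldr (· ∘ ·) id := by
  intro l
  induction l with
  | nil => intro _ h; exact absurd h List.not_mem_nil
  | cons a t ih =>
    intro hnd hmem
    simp only [List.map_cons, List.foldr_cons]
    rcases List.mem_cons.mp hmem with rfl | h
    · have ht : t.map (Function.update g j (T ∘ g j)) = t.map g :=
        List.map_congr_left fun b hb =>
          Function.update_of_ne (fun hbj => (List.nodup_cons.mp hnd).1 (by rw [← hbj]; exact hb)) _ _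
      rw [ht, Function.update_self]
      rfl
    · have haj : a ≠ j := fun h' => (List.nodup_cons.mp hnd).1 (h' ▸ h)
      rw [Function.update_of_ne haj, ih (List.nodup_cons.mp hnd).2 h]
      funext y
      exact (congrFun (hcomm a) _).symm

/-- The product `Δ₁^{i₁} ∘ … ∘ Δ_n^{i_n}`. -/
noncomputable def Dprod (L : Type) [Field L] (x : L) (q n : ℕ) (iv : Fin n → ℕ) :
    (CIdx n →₀ L) → (CIdx n →₀ L) :=
  (List.ofFn fun j : Fin n => (deltaOp L x q n j)^[iv j]).foldr (· ∘ ·) id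

section Struct

variable (root : L → L) (x : L) (n : ℕ)

lemma delta_iter_comm (j j' : Fin n) (k : ℕ) :
    deltaOp L x q n j ∘ (deltaOp L x q n j')^[k]
      = (deltaOp L x q n j')^[k] ∘ deltaOp L x q n j := by
  induction k with
  | zero => rfl
  | succ k ih =>
    rw [Function.iterate_succ']
    funext f
    simp only [Function.comp_apply]
    rw [delta_comm]
    have := congrFun ih f
    simp only [Function.comp_apply] at this
    rw [this]

lemma delta_Dprod (j : Fin n) (iv : Fin n → ℕ) :
    deltaOp L x q n j ∘ Dprod L x q n iv
      = Dprod L x q n (Function.update iv j (iv j + 1)) := by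
  set g : Fin n → (CIdx n →₀ L) → (CIdx n →₀ L) :=
    fun j' => (deltaOp L x q n j')^[iv j'] with hg
  have hfun : (fun j' : Fin n => (deltaOp L x q n j')^[Function.update iv j (iv j + 1) j'])
      = Function.update g j (deltaOp L x q n j ∘ g j) := by
    funext j'
    by_cases h : j' = j
    · subst h
      rw [Function.update_self, Function.update_self]
      exact Function.iterate_succ' _ _
    · rw [Function.update_of_ne h, Function.update_of_ne h]
  unfold Dprod
  rw [hfun, List.ofFn_eq_map, List.ofFn_eq_map,
    foldr_map_update g _ j (fun j' => delta_iter_comm x n j j' (iv j'))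
      _ (List.nodup_finRange n) (List.mem_finRange j)]

lemma monOp_succ_l (l μ : ℕ) (iv : Fin n → ℕ) :
    monOp L root x q n (l + 1) μ iv = tauOp L q n ∘ monOp L root x q n l μ iv := by
  unfold monOp
  rw [Function.iterate_succ']
  rfl

lemma monOp_zero_succ (μ : ℕ) (iv : Fin n → ℕ) :
    monOp L root x q n 0 (μ + 1) iv = dsOp L root x q n ∘ monOp L root x q n 0 μ iv := by
  unfold monOp
  rw [Function.iterate_succ']
  rfl

lemma monOp_zero_zero (iv : Fin n → ℕ) :
    monOp L root x q n 0 0 iv = Dprod L x q n iv := rfl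

lemma monOp_id :
    monOp L root x q n 0 0 (fun _ => 0) = id := by
  rw [monOp_zero_zero]
  unfold Dprod
  refine foldr_id _ fun T hT => ?_
  obtain ⟨j, rfl⟩ := List.mem_ofFn.mp hT
  rfl

end Struct

/-! ### Span lemmas -/

/-- The set of monomial operators. -/
noncomputable def monSet (L : Type) [Field L] (root : L → L) (x : L) (q n : ℕ) :
    Set ((CIdx n →₀ L) → (CIdx n →₀ L)) :=
  {T | ∃ (l μ : ℕ) (iv : Fin n → ℕ), T = monOp L root x q n l μ iv}

section Span

variable (hq : q = p ^ e) (root : L → L) (hroot1 : ∀ c, root c ^ q = c)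
variable (x : L) (n : ℕ)

lemma comp_mem_span (T : (CIdx n →₀ L) → (CIdx n →₀ L)) (σ : L → L)
    (h0 : T 0 = 0) (hadd : ∀ f g : CIdx n →₀ L, T (f + g) = T f + T g)
    (hsm : ∀ (c : L) (f : CIdx n →₀ L), T (c • f) = σ c • T f)
    (hmon : ∀ (l μ : ℕ) (iv : Fin n → ℕ),
      T ∘ monOp L root x q n l μ iv ∈ Submodule.span L (monSet L root x q n)) :
    ∀ P, P ∈ Submodule.span L (monSet L root x q n) →
      T ∘ P ∈ Submodule.span L (monSet L root x q n) := by
  intro P hP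
  induction hP using Submodule.span_induction with
  | mem P hP => obtain ⟨l, μ, iv, rfl⟩ := hP; exact hmon l μ iv
  | zero =>
    have h : T ∘ (0 : (CIdx n →₀ L) → (CIdx n →₀ L)) = 0 := funext fun f => by
      simp only [Function.comp_apply, Pi.zero_apply]; exact h0
    rw [h]; exact zero_mem _
  | add P Q hP hQ ihP ihQ =>
    have h : T ∘ (P + Q) = T ∘ P + T ∘ Q := funext fun f => by
      simp only [Function.comp_apply, Pi.add_apply]; exact hadd _ _
    rw [h]; exact add_mem ihP ihQ
  | smul c P hP ih =>
    have h : T ∘ (c • P) = σ c • (T ∘ P) := funext fun f => by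
      simp only [Function.comp_apply, Pi.smul_apply]; exact hsm c _
    rw [h]; exact Submodule.smul_mem _ _ ih

include hq in
lemma tau_comp_span (P : (CIdx n →₀ L) → (CIdx n →₀ L))
    (hP : P ∈ Submodule.span L (monSet L root x q n)) :
    tauOp L q n ∘ P ∈ Submodule.span L (monSet L root x q n) := by
  refine comp_mem_span root x n _ (fun c => c ^ q) (tau_zero n) (tau_add hq n)
    (tau_smul hq n) (fun l μ iv => ?_) P hP
  rw [← monOp_succ_l]
  exact Submodule.subset_span ⟨l + 1, μ, iv, rfl⟩

include hq hroot1 in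
lemma ds_comp_mon (l μ : ℕ) (iv : Fin n → ℕ) :
    dsOp L root x q n ∘ monOp L root x q n l μ iv
      ∈ Submodule.span L (monSet L root x q n) := by
  induction l with
  | zero =>
    rw [← monOp_zero_succ]
    exact Submodule.subset_span ⟨0, μ + 1, iv, rfl⟩
  | succ l ih =>
    rw [monOp_succ_l]
    have hrel : dsOp L root x q n ∘ (tauOp L q n ∘ monOp L root x q n l μ iv)
        = tauOp L q n ∘ (dsOp L root x q n ∘ monOp L root x q n l μ iv)
          + root (x ^ q - x) • monOp L root x q n l μ iv := funext fun f => by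
      simp only [Function.comp_apply, Pi.add_apply, Pi.smul_apply]
      exact ds_tau_rel hq root hroot1 x n _
    rw [hrel]
    exact add_mem (tau_comp_span hq root x n _ ih)
      (Submodule.smul_mem _ _ (Submodule.subset_span ⟨l, μ, iv, rfl⟩))

include hq hroot1 in
lemma ds_comp_span (P : (CIdx n →₀ L) → (CIdx n →₀ L))
    (hP : P ∈ Submodule.span L (monSet L root x q n)) :
    dsOp L root x q n ∘ P ∈ Submodule.span L (monSet L root x q n) :=
  comp_mem_span root x n _ root (ds_zero root x n) (ds_add hq root hroot1 x n)
    (ds_smul hq root hroot1 x n) (ds_comp_mon hq root hroot1 x n) P hP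

include hq hroot1 in
lemma delta_comp_mon (j : Fin n) :
    ∀ (l μ : ℕ) (iv : Fin n → ℕ),
      deltaOp L x q n j ∘ monOp L root x q n l μ iv
        ∈ Submodule.span L (monSet L root x q n) := by
  intro l
  induction l with
  | zero =>
    intro μ
    induction μ with
    | zero =>
      intro iv
      rw [monOp_zero_zero, delta_Dprod, ← monOp_zero_zero root]
      exact Submodule.subset_span ⟨0, 0, _, rfl⟩
    | succ μ ihμ =>
      intro iv
      rw [monOp_zero_succ]
      have hrel : deltaOp L x q n j ∘ (dsOp L root x q n ∘ monOp L root x q n 0 μ iv)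
          = dsOp L root x q n ∘ (deltaOp L x q n j ∘ monOp L root x q n 0 μ iv)
            - root (x ^ q - x) • (dsOp L root x q n ∘ monOp L root x q n 0 μ iv) :=
        funext fun f => by
          simp only [Function.comp_apply, Pi.sub_apply, Pi.smul_apply]
          exact delta_ds_rel hq root hroot1 x n j _
      rw [hrel]
      refine sub_mem (ds_comp_span hq root hroot1 x n _ (ihμ iv))
        (Submodule.smul_mem _ _ ?_)
      rw [← monOp_zero_succ]
      exact Submodule.subset_span ⟨0, μ + 1, iv, rfl⟩
  | succ l ihl =>
    intro μ iv
    rw [monOp_succ_l]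
    have hrel : deltaOp L x q n j ∘ (tauOp L q n ∘ monOp L root x q n l μ iv)
        = tauOp L q n ∘ (deltaOp L x q n j ∘ monOp L root x q n l μ iv)
          + (x ^ q - x) • (tauOp L q n ∘ monOp L root x q n l μ iv) :=
      funext fun f => by
        simp only [Function.comp_apply, Pi.add_apply, Pi.smul_apply]
        exact delta_tau_rel hq x n j _
    rw [hrel]
    refine add_mem (tau_comp_span hq root x n _ (ihl μ iv))
      (Submodule.smul_mem _ _ ?_)
    rw [← monOp_succ_l]
    exact Submodule.subset_span ⟨l + 1, μ, iv, rfl⟩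

include hq hroot1 in
lemma delta_comp_span (j : Fin n) (P : (CIdx n →₀ L) → (CIdx n →₀ L))
    (hP : P ∈ Submodule.span L (monSet L root x q n)) :
    deltaOp L x q n j ∘ P ∈ Submodule.span L (monSet L root x q n) :=
  comp_mem_span root x n _ (fun c => c) (delta_zero x n j) (delta_add x n j)
    (delta_smul x n j) (delta_comp_mon hq root hroot1 x n j) P hP

end Span

end CarlitzAux

/-- **Canonical form of elements of the Carlitz ring `𝔄_{n+1}` (relation (10)).**
Every finite composition of the generators `τ, d_s, Δ₁, …, Δ_n` and scalar
multiplications lies in the `L`-linear span of the monomial operators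
`τ^l ∘ d_s^μ ∘ Δ₁^{i₁} ∘ … ∘ Δ_n^{i_n}`. -/
theorem carlitz_ring_canonical_form
    (p e q : ℕ) [Fact p.Prime] (he : 0 < e) (hq : q = p ^ e)
    (L : Type) [Field L] [IsAlgClosed L] [CharP L p]
    (φ : RatFunc (GaloisField p e) →+* L)
    (root : L → L) (hroot1 : ∀ c, root c ^ q = c) (hroot2 : ∀ c, root (c ^ q) = c)
    (n : ℕ) (x : L) (hx : x = φ RatFunc.X)
    (ops : List ((CIdx n →₀ L) → (CIdx n →₀ L)))
    (hops : ∀ T ∈ ops, T = tauOp L q n ∨ T = dsOp L root x q n ∨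
      (∃ j : Fin n, T = deltaOp L x q n j) ∨ (∃ lam : L, T = fun f => lam • f)) :
    ops.foldr (· ∘ ·) id ∈ Submodule.span L
      {T : (CIdx n →₀ L) → (CIdx n →₀ L) |
        ∃ (l μ : ℕ) (iv : Fin n → ℕ), T = monOp L root x q n l μ iv} := by
  have hms : {T : (CIdx n →₀ L) → (CIdx n →₀ L) |
      ∃ (l μ : ℕ) (iv : Fin n → ℕ), T = monOp L root x q n l μ iv}
      = monSet L root x q n := rfl
  rw [hms]
  induction ops with
  | nil =>
    simp only [List.foldr_nil]
    rw [← monOp_id root x n]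
    exact Submodule.subset_span ⟨0, 0, fun _ => 0, rfl⟩
  | cons T ops ih =>
    simp only [List.foldr_cons]
    have hS := ih (fun T' hT' => hops T' (List.mem_cons_of_mem _ hT'))
    rcases hops T List.mem_cons_self with h | h | ⟨j, h⟩ | ⟨lam, h⟩ <;> subst h
    · exact tau_comp_span hq root x n _ hS
    · exact ds_comp_span hq root hroot1 x n _ hS
    · exact delta_comp_span hq root hroot1 x n j _ hS
    · have heq : (fun f : CIdx n →₀ L => lam • f) ∘ ops.foldr (· ∘ ·) id
          = lam • ops.foldr (· ∘ ·) id := funext fun f => rfl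
      rw [heq]
      exact Submodule.smul_mem _ _ hS
end
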